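/- Fix integers k ≥ 1 and n ≥ 0. The k-ribbon insertion algorithm π ↦ (P(π), Q(π)) is a bijection from the set of k-colored permutations of length n onto the set of pairs (P, Q) of tableaux of the same k-ribbon Fibonacci shape in which P is a standard k-ribbon Fibonacci tableau with entries 1, ..., n and Q is a k-ribbon Fibonacci path tableau with entries 1, ..., n. -/

import Mathlib

namespace KRF

/-- A letter of the alphabet `{1_1, …, 1_k, 2}`:  `one j` stands for the letter `1_j`
(with `1 ≤ j ≤ k` for genuine letters), and `two` stands for the letter `2`. -/
inductive Letter (k : ℕ) : Type where
  | one : ℕ → Letter k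
  | two : Letter k
deriving DecidableEq

/-- A word over the alphabet `{1_1, …, 1_k, 2}`, listed from the leftmost letter to the
rightmost letter. -/
abbrev Word (k : ℕ) := List (Letter k)

/-- The contribution of a letter to the rank: each `1_j` counts `1` and each `2` counts `2`. -/
def Letter.rank {k : ℕ} : Letter k → ℕ
  | .one _ => 1
  | .two => 2

/-- The rank of a word: the sum of its letters. -/
def Word.rank {k : ℕ} (w : Word k) : ℕ := (w.map Letter.rank).sum

/-- The letter `1_j` is valid when `1 ≤ j ≤ k`. -/
def Letter.Valid (k : ℕ) : Letter k → Prop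
  | .one j => 1 ≤ j ∧ j ≤ k
  | .two => True

/-- A genuine word of the Fibonacci poset `Z(k)`: all of its letters are valid. -/
def Word.Valid (k : ℕ) (w : Word k) : Prop := ∀ l ∈ w, l.Valid k

/-- The cover relation of the Fibonacci poset `Z(k)`:  `z` is covered by `w` iff `z` is
obtained from `w` either by changing a `2` into some `1_j` when all letters to the left of
that `2` are `2`'s, or by deleting the leftmost letter of the form `1_j`. -/
def ZCovers (k : ℕ) (z w : Word k) : Prop :=
  (∃ (p s : Word k) (j : ℕ), (∀ l ∈ p, l = Letter.two) ∧ 1 ≤ j ∧ j ≤ k ∧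
      w = p ++ Letter.two :: s ∧ z = p ++ Letter.one j :: s) ∨
  (∃ (p s : Word k) (j : ℕ), (∀ l ∈ p, l = Letter.two) ∧ 1 ≤ j ∧ j ≤ k ∧
      w = p ++ Letter.one j :: s ∧ z = p ++ s)

/-- `c 0 ⋖ c 1 ⋖ ⋯ ⋖ c n` is a saturated chain in `Z(k)` starting at the empty word. -/
def IsZChain (k n : ℕ) (c : ℕ → Word k) : Prop :=
  c 0 = [] ∧ ∀ i, i < n → ZCovers k (c i) (c (i + 1))

end KRF
namespace KRF

/-- A column of a (tiled and filled) `k`-ribbon Fibonacci tableau.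
`single h v` is a column of height 1 (shape letter `1_h`) tiled by one `k`-ribbon of
height `h` filled with the value `v`.
`double ht hb vt vb` is a column of height 2 (shape letter `2`) tiled by a `k`-ribbon of
height `ht` filled with `vt` stacked on top of a `k`-ribbon of height `hb` (always
`hb = k + 1 - ht` for genuine tableaux) filled with `vb`. -/
inductive Col (k : ℕ) : Type where
  | single : ℕ → ℕ → Col k
  | double : ℕ → ℕ → ℕ → ℕ → Col k
deriving DecidableEq

/-- A (tiled, filled) `k`-ribbon Fibonacci tableau: its list of columns, from the leftmost
column to the rightmost one. -/
abbrev Tab (k : ℕ) := List (Col k)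

/-- The shape letter of a column. -/
def Col.shape {k : ℕ} : Col k → Letter k
  | .single h _ => Letter.one h
  | .double _ _ _ _ => Letter.two

/-- The `k`-ribbon Fibonacci shape (a word) underlying a tableau. -/
def Tab.shape {k : ℕ} (T : Tab k) : Word k := T.map Col.shape

/-- The value in the bottom `k`-ribbon of a column. -/
def Col.bottomVal {k : ℕ} : Col k → ℕ
  | .single _ v => v
  | .double _ _ _ vb => vb

/-- The heights occurring in a column are genuine ribbon heights: between `1` and `k`,
and in a column of height 2 the two heights sum to `k + 1`. -/
def Col.HeightsValid (k : ℕ) : Col k → Prop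
  | .single h _ => 1 ≤ h ∧ h ≤ k
  | .double ht hb _ _ => 1 ≤ ht ∧ ht ≤ k ∧ hb = k + 1 - ht

/-- The list of all entries of a tableau (one for each `k`-ribbon). -/
def Tab.entries {k : ℕ} (T : Tab k) : List ℕ :=
  (T.map fun c => match c with
    | Col.single _ v => [v]
    | Col.double _ _ vt vb => [vt, vb]).flatten

/-- The list of the bottom-ribbon values of the columns of a tableau. -/
def Tab.bottoms {k : ℕ} (T : Tab k) : List ℕ := T.map Col.bottomVal

/-- `T` is a standard `k`-ribbon Fibonacci tableau with entries `1, …, n`: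
heights are valid, the entries are exactly `1, …, n`,  and the tableau can be built by
placing `n, n-1, …, 1` in order, each new `k`-ribbon being either appended (as a new
rightmost height-1 column) to the shape formed by the `k`-ribbons containing larger
entries, or stacked on top of a single such `k`-ribbon.  Equivalently (and this is how we
formalize it): the bottom entries strictly decrease from left to right (in particular the
`k`-ribbon containing the leftmost square of the bottom row contains `n`), and in each
column of height 2 the top entry is smaller than the bottom entry. -/
def IsStandardTab (k n : ℕ) (T : Tab k) : Prop :=
  (∀ c ∈ T, Col.HeightsValid k c) ∧
  (Tab.entries T).Perm (List.range' 1 n) ∧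
  List.Chain' (fun a b => b < a) (Tab.bottoms T) ∧
  (∀ c ∈ T, ∀ ht hb vt vb, c = Col.double ht hb vt vb → vt < vb)

/-- Updating a (partial) path tableau along one cover step `z ⋖ w` of `Z(k)`, placing the
value `i` in the `k` new squares of `w` relative to `z`:  if `w` is obtained from `z` by
inserting a letter `1_j` after the prefix of `2`'s, a new height-1 column with a single
ribbon of height `j` filled with `i` is created there; if `w` is obtained from `z` by
changing the letter `1_h` just after the prefix of `2`'s into a `2`, the `k` new squares
of that column form a `k`-ribbon of height `k + 1 - h` filled with `i`, stacked on top of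
the already present `k`-ribbon of height `h`. -/
def updateTab (k : ℕ) (i : ℕ) : Word k → Word k → Tab k → Tab k
  | Letter.two :: z', Letter.two :: w', c :: T => c :: updateTab k i z' w' T
  | Letter.one h :: _, Letter.two :: _, Col.single _ v :: T =>
      Col.double (k + 1 - h) h i v :: T
  | z, Letter.one j :: w', T => if z = w' then Col.single j i :: T else T
  | _, _, T => T

/-- The `k`-ribbon Fibonacci path tableau determined by a saturated chain in `Z(k)`:
for each `i = 1, …, n` the value `i` is placed in the `k` new squares of `c i` relative
to `c (i-1)`. -/
def chainTab (k : ℕ) (c : ℕ → Word k) : ℕ → Tab k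
  | 0 => []
  | m + 1 => updateTab k (m + 1) (c m) (c (m + 1)) (chainTab k c m)

/-- `T` is a `k`-ribbon Fibonacci path tableau with entries `1, …, n`: it is obtained
from some saturated chain `∅ = c 0 ⋖ c 1 ⋖ ⋯ ⋖ c n` in `Z(k)` by placing `i`'s in the
`k` new squares created at the `i`-th step. -/
def IsPathTab (k n : ℕ) (T : Tab k) : Prop :=
  ∃ c : ℕ → Word k, IsZChain k n c ∧ T = chainTab k c n

end KRF
namespace KRF

/-- A `k`-colored permutation of length `n`: a permutation `x_1 x_2 ⋯ x_n` of `{1, …, n}`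
(here `x_i = perm i + 1`, using `Fin n` positions and values) together with a color
`color i ∈ {1, …, k}` attached to each entry. -/
structure ColoredPerm (n k : ℕ) : Type where
  perm : Equiv.Perm (Fin n)
  color : Fin n → ℕ
  color_pos : ∀ i, 1 ≤ color i
  color_le : ∀ i, color i ≤ k

/-- Insertion of a value `x` of color `j` into a `k`-ribbon Fibonacci tableau: compare `x`
with the value `t` in the `k`-ribbon containing the leftmost square of the bottom row.
If the tableau is empty or `x > t`, a new leftmost height-1 column consisting of a single
`k`-ribbon of height `j` filled with `x` is created.  If `x < t`, a `k`-ribbon of height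
`j` filled with `x` is placed on top of the `k`-ribbon containing `t` (which is forced to
become a `k`-ribbon of height `k + 1 - j`); if a `k`-ribbon of height `l` filled with `b`
was already on top of the ribbon containing `t`, it is bumped out and the value `b` with
color `l` is inserted recursively into the tableau formed by the columns to the right. -/
def insertVal (k : ℕ) (x j : ℕ) : Tab k → Tab k
  | [] => [Col.single j x]
  | c :: rest =>
    if Col.bottomVal c < x then Col.single j x :: c :: rest
    else
      match c with
      | Col.single _ v => Col.double j (k + 1 - j) x v :: rest
      | Col.double ht _ vt vb => Col.double j (k + 1 - j) x vb :: insertVal k vt ht rest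

/-- The insertion tableau obtained after inserting the first `i` colored entries
`x_1^{j_1}, …, x_i^{j_i}` of the `k`-colored permutation `π` into the empty tableau. -/
def PPartial (k n : ℕ) (π : ColoredPerm n k) (i : ℕ) : Tab k :=
  ((List.finRange n).take i).foldl
    (fun T m => insertVal k ((π.perm m : ℕ) + 1) (π.color m) T) []

/-- The insertion tableau `P(π)` of a `k`-colored permutation. -/
def PTab (k n : ℕ) (π : ColoredPerm n k) : Tab k := PPartial k n π n

/-- The chain of shapes of the partial insertion tableaux of `π`. -/
def QChain (k n : ℕ) (π : ColoredPerm n k) (i : ℕ) : Word k :=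
  Tab.shape (PPartial k n π i)

/-- The recording tableau `Q(π)`: it has the same shape as `P(π)`, and after the `i`-th
insertion the value `i` is placed in the `k` squares by which the shape grew at step `i`. -/
def QTab (k n : ℕ) (π : ColoredPerm n k) : Tab k := chainTab k (QChain k n π) n

end KRF
namespace KRF



/-! ### Auxiliary development -/

open List

variable {k : ℕ}

@[simp] lemma shape_nil : (Tab.shape ([] : Tab k)) = [] := rfl
@[simp] lemma shape_cons (c : Col k) (T : Tab k) :
    Tab.shape (c :: T) = Col.shape c :: Tab.shape T := rfl
lemma shape_append (A B : Tab k) : Tab.shape (A ++ B) = Tab.shape A ++ Tab.shape B := by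
  simp [Tab.shape]

@[simp] lemma entries_nil : (Tab.entries ([] : Tab k)) = [] := rfl
@[simp] lemma entries_cons_single (h v : ℕ) (T : Tab k) :
    Tab.entries (Col.single h v :: T) = v :: Tab.entries T := rfl
@[simp] lemma entries_cons_double (a b x y : ℕ) (T : Tab k) :
    Tab.entries (Col.double a b x y :: T) = x :: y :: Tab.entries T := rfl
lemma entries_append (A B : Tab k) : Tab.entries (A ++ B) = Tab.entries A ++ Tab.entries B := by
  simp [Tab.entries]

@[simp] lemma bottoms_nil : (Tab.bottoms ([] : Tab k)) = [] := rfl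
@[simp] lemma bottoms_cons (c : Col k) (T : Tab k) :
    Tab.bottoms (c :: T) = Col.bottomVal c :: Tab.bottoms T := rfl
@[simp] lemma bottomVal_single (h v : ℕ) : Col.bottomVal (Col.single h v : Col k) = v := rfl
@[simp] lemma bottomVal_double (a b x y : ℕ) :
    Col.bottomVal (Col.double a b x y : Col k) = y := rfl
@[simp] lemma colshape_single (h v : ℕ) :
    Col.shape (Col.single h v : Col k) = Letter.one h := rfl
@[simp] lemma colshape_double (a b x y : ℕ) :
    Col.shape (Col.double a b x y : Col k) = Letter.two := rfl

lemma insertVal_nil (x j : ℕ) : insertVal k x j [] = [Col.single j x] := rfl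
lemma insertVal_cons_lt {x : ℕ} {c : Col k} {rest : Tab k} (h : Col.bottomVal c < x) (j : ℕ) :
    insertVal k x j (c :: rest) = Col.single j x :: c :: rest := by
  simp [insertVal, h]
lemma insertVal_single_ge {x v : ℕ} (h : ¬ v < x) (j a : ℕ) (rest : Tab k) :
    insertVal k x j (Col.single a v :: rest) = Col.double j (k + 1 - j) x v :: rest := by
  simp [insertVal, h]
lemma insertVal_double_ge {x vb : ℕ} (h : ¬ vb < x) (j a b vt : ℕ) (rest : Tab k) :
    insertVal k x j (Col.double a b vt vb :: rest)
      = Col.double j (k + 1 - j) x vb :: insertVal k vt a rest := by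
  simp [insertVal, h]

lemma mem_entries_of_mem_bottoms {T : Tab k} {b : ℕ} (hb : b ∈ Tab.bottoms T) :
    b ∈ Tab.entries T := by
  induction T with
  | nil => simpa using hb
  | cons c rest ih =>
    cases c with
    | single h v =>
      rcases (by simpa using hb : b = v ∨ b ∈ Tab.bottoms rest) with h1 | h1
      · simp [h1]
      · simp [ih h1]
    | double a b' x y =>
      rcases (by simpa using hb : b = y ∨ b ∈ Tab.bottoms rest) with h1 | h1
      · simp [h1]
      · simp [ih h1]

/-- The standardness invariant maintained by insertion (standardness plus distinctness of
entries). -/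
def Std (k : ℕ) (T : Tab k) : Prop :=
  (∀ c ∈ T, Col.HeightsValid k c) ∧
  List.Chain' (fun a b => b < a) (Tab.bottoms T) ∧
  (∀ c ∈ T, ∀ ht hb vt vb, c = Col.double ht hb vt vb → vt < vb) ∧
  (Tab.entries T).Nodup

lemma std_nil : Std k ([] : Tab k) := ⟨by simp, List.isChain_nil, by simp, by simp⟩

lemma nodup_entries_tail {c : Col k} {T : Tab k} (h : (Tab.entries (c :: T)).Nodup) :
    (Tab.entries T).Nodup := by
  cases c with
  | single a v => exact (List.nodup_cons.mp h).2
  | double a b x y => exact (List.nodup_cons.mp (List.nodup_cons.mp h).2).2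

lemma std_tail {c : Col k} {T : Tab k} (h : Std k (c :: T)) : Std k T := by
  obtain ⟨h1, h2, h3, h4⟩ := h
  exact ⟨fun d hd => h1 d (by simp [hd]), (List.isChain_cons.mp (by simpa [List.Chain'] using h2)).2,
    fun d hd => h3 d (by simp [hd]), nodup_entries_tail h4⟩

instance : IsTrans ℕ (fun a b => b < a) := ⟨fun _ _ _ h1 h2 => lt_trans h2 h1⟩

lemma entries_lt {T : Tab k} {y : ℕ}
    (hb : ∀ b ∈ Tab.bottoms T, b < y)
    (htb : ∀ c ∈ T, ∀ ht hb' vt vb, c = Col.double ht hb' vt vb → vt < vb) :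
    ∀ e ∈ Tab.entries T, e < y := by
  induction T with
  | nil => simp
  | cons c rest ih =>
    intro e he
    have hrec := ih (fun b hbm => hb b (by simp [hbm]))
      (fun d hd => htb d (by simp [hd]))
    cases c with
    | single h v =>
      rcases (by simpa using he : e = v ∨ e ∈ Tab.entries rest) with h1 | h1
      · subst h1; exact hb e (by simp)
      · exact hrec e h1
    | double a b x y' =>
      have hy' : y' < y := hb y' (by simp)
      rcases (by simpa using he : e = x ∨ e = y' ∨ e ∈ Tab.entries rest) with h1 | h1 | h1
      · subst h1
        exact lt_trans (htb _ (by simp) a b e y' rfl) hy'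
      · subst h1; exact hy'
      · exact hrec e h1

/-! ### Properties of `insertVal` -/

lemma insertVal_entries (x j : ℕ) :
    ∀ T : Tab k, (Tab.entries (insertVal k x j T)).Perm (x :: Tab.entries T)
  | [] => by simp [insertVal_nil]
  | c :: rest => by
    cases c with
    | single h v =>
      by_cases hlt : v < x
      · rw [insertVal_cons_lt (by simpa using hlt)]
        exact List.Perm.refl _
      · rw [insertVal_single_ge hlt]
        simp
    | double ht hb vt vb =>
      by_cases hlt : vb < x
      · rw [insertVal_cons_lt (by simpa using hlt)]
        exact List.Perm.refl _
      · rw [insertVal_double_ge hlt]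
        have ih := insertVal_entries vt ht rest
        calc Tab.entries (Col.double j (k+1-j) x vb :: insertVal k vt ht rest)
            = x :: vb :: Tab.entries (insertVal k vt ht rest) := rfl
          _ ~ x :: vb :: vt :: Tab.entries rest := ((ih.cons vb).cons x)
          _ ~ x :: vt :: vb :: Tab.entries rest := (List.Perm.swap _ _ _).cons x

lemma insertVal_heights {x j : ℕ} (hj1 : 1 ≤ j) (hjk : j ≤ k) :
    ∀ T : Tab k, (∀ c ∈ T, Col.HeightsValid k c) →
      ∀ c ∈ insertVal k x j T, Col.HeightsValid k c := by
  intro T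
  induction T generalizing x j with
  | nil =>
    intro _ c hc
    rw [insertVal_nil] at hc
    simp only [List.mem_singleton] at hc
    subst hc; exact ⟨hj1, hjk⟩
  | cons c0 rest ih =>
    intro hT c hc
    by_cases hlt : Col.bottomVal c0 < x
    · rw [insertVal_cons_lt hlt] at hc
      rcases List.mem_cons.mp hc with h1 | h1
      · subst h1; exact ⟨hj1, hjk⟩
      · exact hT _ h1
    · cases c0 with
      | single h v =>
        rw [insertVal_single_ge (by simpa using hlt)] at hc
        rcases List.mem_cons.mp hc with h1 | h1
        · subst h1; exact ⟨hj1, hjk, rfl⟩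
        · exact hT _ (by simp [h1])
      | double ht hb vt vb =>
        rw [insertVal_double_ge (by simpa using hlt)] at hc
        obtain ⟨hht1, hhtk, hhb⟩ := hT (Col.double ht hb vt vb) (by simp)
        rcases List.mem_cons.mp hc with h1 | h1
        · subst h1; exact ⟨hj1, hjk, rfl⟩
        · exact ih hht1 hhtk (fun d hd => hT d (by simp [hd])) c h1

lemma mem_bottoms_insertVal (x j : ℕ) :
    ∀ T : Tab k, ∀ b ∈ Tab.bottoms (insertVal k x j T), b = x ∨ b ∈ Tab.entries T := by
  intro T
  induction T generalizing x j with
  | nil =>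
    intro b hb
    rw [insertVal_nil] at hb
    left; simpa using hb
  | cons c0 rest ih =>
    intro b hb
    by_cases hlt : Col.bottomVal c0 < x
    · rw [insertVal_cons_lt hlt] at hb
      simp only [bottoms_cons, bottomVal_single, List.mem_cons] at hb
      rcases hb with h1 | h1
      · exact Or.inl h1
      · exact Or.inr (mem_entries_of_mem_bottoms (by simpa using h1))
    · cases c0 with
      | single h v =>
        rw [insertVal_single_ge (by simpa using hlt)] at hb
        simp only [bottoms_cons, bottomVal_double, List.mem_cons] at hb
        rcases hb with h1 | h1
        · exact Or.inr (by simp [h1])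
        · exact Or.inr (by simp [mem_entries_of_mem_bottoms h1])
      | double ht hb' vt vb =>
        rw [insertVal_double_ge (by simpa using hlt)] at hb
        simp only [bottoms_cons, bottomVal_double, List.mem_cons] at hb
        rcases hb with h1 | h1
        · exact Or.inr (by simp [h1])
        · rcases ih vt ht b h1 with h2 | h2
          · exact Or.inr (by simp [h2])
          · exact Or.inr (by simp [h2])

lemma std_insertVal {x j : ℕ} (hj1 : 1 ≤ j) (hjk : j ≤ k) :
    ∀ T : Tab k, Std k T → x ∉ Tab.entries T → Std k (insertVal k x j T) := by
  intro T
  induction T generalizing x j with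
  | nil =>
    intro _ _
    rw [insertVal_nil]
    refine ⟨?_, List.isChain_singleton _, by simp, by simp⟩
    intro c hc
    simp only [List.mem_singleton] at hc
    subst hc; exact ⟨hj1, hjk⟩
  | cons c0 rest ih =>
    intro hT hx
    obtain ⟨hH, hC, hD, hN⟩ := hT
    by_cases hlt : Col.bottomVal c0 < x
    · rw [insertVal_cons_lt hlt]
      refine ⟨?_, ?_, ?_, ?_⟩
      · rw [← insertVal_cons_lt hlt (j := j)]
        exact insertVal_heights hj1 hjk _ hH
      · simp only [bottoms_cons, bottomVal_single]
        exact List.isChain_cons.mpr ⟨fun y hy => by simp at hy; omega, hC⟩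
      · intro c hc ht hb vt vb hceq
        rcases List.mem_cons.mp hc with h1 | h1
        · rw [h1] at hceq; exact absurd hceq (by simp)
        · exact hD c h1 ht hb vt vb hceq
      · cases c0 with
        | single a v => simpa using And.intro hx hN
        | double a b' u v => simpa using And.intro hx hN
    · cases c0 with
      | single h v =>
        have hxv : x < v := by
          have hne : x ≠ v := fun he => hx (by simp [he])
          simp only [bottomVal_single] at hlt; omega
        rw [insertVal_single_ge (by simpa using hlt)]
        refine ⟨?_, ?_, ?_, ?_⟩
        · rw [← insertVal_single_ge (by simpa using hlt : ¬ v < x) j h rest]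
          exact insertVal_heights hj1 hjk _ hH
        · simpa using hC
        · intro c hc ht hb vt vb hceq
          rcases List.mem_cons.mp hc with h1 | h1
          · rw [h1] at hceq
            simp only [Col.double.injEq] at hceq
            omega
          · exact hD c (by simp [h1]) ht hb vt vb hceq
        · simpa using And.intro hx hN
      | double ht hb' vt vb =>
        have hxvb : x < vb := by
          have hne : x ≠ vb := fun he => hx (by simp [he])
          simp only [bottomVal_double] at hlt; omega
        have hNrest : (Tab.entries rest).Nodup := nodup_entries_tail hN
        have hvtrest : vt ∉ Tab.entries rest := by
          simp only [entries_cons_double, List.nodup_cons, List.mem_cons] at hN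
          exact fun hm => hN.1 (Or.inr hm)
        have hstdrest : Std k rest := std_tail ⟨hH, hC, hD, hN⟩
        obtain ⟨hht1, hhtk, hhb⟩ := hH (Col.double ht hb' vt vb) (by simp)
        have hins := ih hht1 hhtk hstdrest hvtrest
        have hvtvb : vt < vb := hD _ (by simp) ht hb' vt vb rfl
        have hbelow : ∀ b ∈ Tab.bottoms rest, b < vb := by
          have hpw := List.isChain_iff_pairwise.mp (by simpa [List.Chain'] using hC)
          exact fun b hbm => (List.pairwise_cons.mp hpw).1 b hbm
        have hentlt : ∀ e ∈ Tab.entries rest, e < vb :=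
          entries_lt hbelow (fun d hd => hD d (by simp [hd]))
        rw [insertVal_double_ge (by simpa using hlt)]
        refine ⟨?_, ?_, ?_, ?_⟩
        · rw [← insertVal_double_ge (by simpa using hlt : ¬ vb < x) j ht hb' vt rest]
          exact insertVal_heights hj1 hjk _ hH
        · simp only [bottoms_cons, bottomVal_double]
          refine List.isChain_cons.mpr ⟨?_, hins.2.1⟩
          intro y hy
          have hym : y ∈ Tab.bottoms (insertVal k vt ht rest) := List.mem_of_mem_head? hy
          rcases mem_bottoms_insertVal vt ht rest y hym with h1 | h1
          · omega
          · exact hentlt y h1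
        · intro c hc ht2 hb2 vt2 vb2 hceq
          rcases List.mem_cons.mp hc with h1 | h1
          · rw [h1] at hceq
            simp only [Col.double.injEq] at hceq
            omega
          · exact hins.2.2.1 c h1 ht2 hb2 vt2 vb2 hceq
        · have hperm : (x :: Tab.entries (Col.double ht hb' vt vb :: rest)).Perm
              (Tab.entries (Col.double j (k+1-j) x vb :: insertVal k vt ht rest)) := by
            calc x :: Tab.entries (Col.double ht hb' vt vb :: rest)
                = x :: vt :: vb :: Tab.entries rest := rfl
              _ ~ x :: vb :: vt :: Tab.entries rest := (List.Perm.swap _ _ _).cons x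
              _ ~ x :: vb :: Tab.entries (insertVal k vt ht rest) :=
                  (((insertVal_entries vt ht rest).symm.cons vb).cons x)
          exact hperm.nodup (List.nodup_cons.mpr ⟨hx, hN⟩)


/-! ### Cover relation lemmas -/

lemma zcovers_cons_two {z w : Word k} (h : ZCovers k z w) :
    ZCovers k (Letter.two :: z) (Letter.two :: w) := by
  rcases h with ⟨p, s, j, hp, h1, h2, h3, h4⟩ | ⟨p, s, j, hp, h1, h2, h3, h4⟩
  · exact Or.inl ⟨Letter.two :: p, s, j, by
      intro l hl; rcases List.mem_cons.mp hl with rfl | hl; rfl; exact hp l hl,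
      h1, h2, by simp [h3], by simp [h4]⟩
  · exact Or.inr ⟨Letter.two :: p, s, j, by
      intro l hl; rcases List.mem_cons.mp hl with rfl | hl; rfl; exact hp l hl,
      h1, h2, by simp [h3], by simp [h4]⟩

lemma zcovers_insertVal {x j : ℕ} (hj1 : 1 ≤ j) (hjk : j ≤ k) :
    ∀ T : Tab k, (∀ c ∈ T, Col.HeightsValid k c) →
      ZCovers k (Tab.shape T) (Tab.shape (insertVal k x j T)) := by
  intro T
  induction T generalizing x j with
  | nil =>
    intro _
    exact Or.inr ⟨[], [], j, by simp, hj1, hjk, by simp [insertVal_nil, Tab.shape], by simp⟩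
  | cons c0 rest ih =>
    intro hH
    by_cases hlt : Col.bottomVal c0 < x
    · rw [insertVal_cons_lt hlt]
      exact Or.inr ⟨[], Tab.shape (c0 :: rest), j, by simp, hj1, hjk, by simp, by simp⟩
    · cases c0 with
      | single h v =>
        rw [insertVal_single_ge (by simpa using hlt)]
        have hhv : 1 ≤ h ∧ h ≤ k := hH (Col.single h v) (by simp)
        exact Or.inl ⟨[], Tab.shape rest, h, by simp, hhv.1, hhv.2, by simp, by simp⟩
      | double ht hb vt vb =>
        rw [insertVal_double_ge (by simpa using hlt)]
        obtain ⟨h1, h2, _⟩ := hH (Col.double ht hb vt vb) (by simp)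
        have := ih (x := vt) (j := ht) h1 h2 (fun d hd => hH d (by simp [hd]))
        simpa using zcovers_cons_two this

/-! ### Reverse insertion -/

/-- Reverse insertion: given the previous shape `z` and a tableau `T`, recover the value,
the color, and the tableau before the last insertion. -/
def unIns (k : ℕ) : Word k → Tab k → ℕ × ℕ × Tab k
  | _, [] => (0, 0, [])
  | _, Col.single j x :: rest => (x, j, rest)
  | Letter.one h :: _, Col.double j _ x vb :: rest => (x, j, Col.single h vb :: rest)
  | Letter.two :: z', Col.double j _ x vb :: rest =>
      let r := unIns k z' rest
      (x, j, Col.double r.2.1 (k + 1 - r.2.1) r.1 vb :: r.2.2)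
  | [], Col.double _ _ x _ :: rest => (x, 0, rest)

lemma unIns_single (z : Word k) (j x : ℕ) (rest : Tab k) :
    unIns k z (Col.single j x :: rest) = (x, j, rest) := by
  cases z with
  | nil => rfl
  | cons a z => cases a <;> rfl

lemma unIns_double_one (h : ℕ) (z : Word k) (j b x vb : ℕ) (rest : Tab k) :
    unIns k (Letter.one h :: z) (Col.double j b x vb :: rest) = (x, j, Col.single h vb :: rest) := rfl

lemma unIns_double_two (z : Word k) (j b x vb : ℕ) (rest : Tab k) :
    unIns k (Letter.two :: z) (Col.double j b x vb :: rest)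
      = (x, j, Col.double (unIns k z rest).2.1 (k + 1 - (unIns k z rest).2.1)
          (unIns k z rest).1 vb :: (unIns k z rest).2.2) := rfl

/-- Reverse insertion inverts insertion (given valid heights). -/
lemma unIns_insertVal :
    ∀ T : Tab k, (∀ c ∈ T, Col.HeightsValid k c) → ∀ x j,
      unIns k (Tab.shape T) (insertVal k x j T) = (x, j, T) := by
  intro T
  induction T with
  | nil => intro _ x j; rw [insertVal_nil]; exact unIns_single _ _ _ _
  | cons c0 rest ih =>
    intro hH x j
    by_cases hlt : Col.bottomVal c0 < x
    · rw [insertVal_cons_lt hlt, unIns_single]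
    · cases c0 with
      | single h v =>
        rw [insertVal_single_ge (by simpa using hlt)]
        simp only [shape_cons, colshape_single]
        rw [unIns_double_one]
      | double ht hb vt vb =>
        obtain ⟨h1, h2, h3⟩ := hH (Col.double ht hb vt vb) (by simp)
        rw [insertVal_double_ge (by simpa using hlt)]
        simp only [shape_cons, colshape_double]
        rw [unIns_double_two]
        rw [ih (fun d hd => hH d (by simp [hd])) vt ht]
        simp [h3]

/-! ### Shape decomposition -/

lemma col_of_shape_two {c : Col k} (h : Col.shape c = Letter.two) :
    ∃ a b x y, c = Col.double a b x y := by
  cases c with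
  | single a v => exact absurd h (by simp)
  | double a b x y => exact ⟨a, b, x, y, rfl⟩

lemma col_of_shape_one {c : Col k} {j : ℕ} (h : Col.shape c = Letter.one j) :
    ∃ v, c = Col.single j v := by
  cases c with
  | single a v =>
    simp only [colshape_single, Letter.one.injEq] at h
    exact ⟨v, by rw [h]⟩
  | double a b x y => exact absurd h (by simp)

lemma shape_split :
    ∀ (p : Word k) (T : Tab k) (l : Letter k) (s : Word k), Tab.shape T = p ++ l :: s →
      ∃ D col R, T = D ++ col :: R ∧ Tab.shape D = p ∧ Col.shape col = l ∧ Tab.shape R = s := by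
  intro p
  induction p with
  | nil =>
    intro T l s h
    cases T with
    | nil => simp at h
    | cons c T' =>
      simp only [shape_cons, List.nil_append, List.cons.injEq] at h
      exact ⟨[], c, T', by simp, by simp, h.1, h.2⟩
  | cons a p' ih =>
    intro T l s h
    cases T with
    | nil => simp at h
    | cons c T' =>
      simp only [shape_cons, List.cons_append, List.cons.injEq] at h
      obtain ⟨D, col, R, h1, h2, h3, h4⟩ := ih T' l s h.2
      exact ⟨c :: D, col, R, by simp [h1], by simp [h2, h.1], h3, h4⟩

/-! ### `updateTab` equations -/

lemma updateTab_two_two (i : ℕ) (z' w' : Word k) (c : Col k) (T : Tab k) :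
    updateTab k i (Letter.two :: z') (Letter.two :: w') (c :: T)
      = c :: updateTab k i z' w' T := rfl

lemma updateTab_one_two (i h : ℕ) (z0 w0 : Word k) (h' v : ℕ) (T : Tab k) :
    updateTab k i (Letter.one h :: z0) (Letter.two :: w0) (Col.single h' v :: T)
      = Col.double (k + 1 - h) h i v :: T := rfl

lemma updateTab_ins_eq (i j : ℕ) (z : Word k) (w' : Word k) (T : Tab k) :
    updateTab k i z (Letter.one j :: w') T = if z = w' then Col.single j i :: T else T := by
  cases z with
  | nil => cases T <;> rfl
  | cons a z' => cases a <;> cases T <;> rfl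

lemma updateTab_ins (i j : ℕ) :
    ∀ (D : Tab k), (∀ c ∈ D, Col.shape c = Letter.two) → ∀ (R : Tab k),
      updateTab k i (Tab.shape D ++ Tab.shape R) (Tab.shape D ++ Letter.one j :: Tab.shape R)
          (D ++ R)
        = D ++ Col.single j i :: R := by
  intro D
  induction D with
  | nil =>
    intro _ R
    simp only [shape_nil, List.nil_append]
    rw [updateTab_ins_eq]
    simp
  | cons c D' ih =>
    intro hD R
    have hc : Col.shape c = Letter.two := hD c (by simp)
    simp only [shape_cons, hc, List.cons_append]
    rw [updateTab_two_two]
    rw [ih (fun d hd => hD d (by simp [hd])) R]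

lemma updateTab_chg (i h v : ℕ) :
    ∀ (D : Tab k), (∀ c ∈ D, Col.shape c = Letter.two) → ∀ (R : Tab k) (s : Word k),
      updateTab k i (Tab.shape D ++ Letter.one h :: s) (Tab.shape D ++ Letter.two :: s)
          (D ++ Col.single h v :: R)
        = D ++ Col.double (k + 1 - h) h i v :: R := by
  intro D
  induction D with
  | nil =>
    intro _ R s
    simp only [shape_nil, List.nil_append]
    rfl
  | cons c D' ih =>
    intro hD R s
    have hc : Col.shape c = Letter.two := hD c (by simp)
    simp only [shape_cons, hc, List.cons_append]
    rw [updateTab_two_two]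
    rw [ih (fun d hd => hD d (by simp [hd])) R s]

/-! ### The shape at time `i` of a path tableau -/

/-- The shape, at time `i`, of the partial tableau of entries `≤ i` of a path tableau. -/
def shapeAt (k : ℕ) (i : ℕ) (T : Tab k) : Word k :=
  T.filterMap fun c => match c with
    | Col.single h v => if v ≤ i then some (Letter.one h) else none
    | Col.double _ hb vt vb =>
        if vt ≤ i then some Letter.two else if vb ≤ i then some (Letter.one hb) else none

@[simp] lemma shapeAt_nil (i : ℕ) : shapeAt k i [] = [] := rfl

lemma shapeAt_append (i : ℕ) (A B : Tab k) :
    shapeAt k i (A ++ B) = shapeAt k i A ++ shapeAt k i B := by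
  simp [shapeAt]

lemma shapeAt_full (i : ℕ) :
    ∀ T : Tab k, (∀ e ∈ Tab.entries T, e ≤ i) → shapeAt k i T = Tab.shape T := by
  intro T
  induction T with
  | nil => simp
  | cons c rest ih =>
    intro hT
    cases c with
    | single h v =>
      have hv : v ≤ i := hT v (by simp)
      have := ih (fun e he => hT e (by simp [he]))
      simp [shapeAt, hv] at this ⊢
      exact this
    | double a b x y =>
      have hx : x ≤ i := hT x (by simp)
      have := ih (fun e he => hT e (by simp [he]))
      simp [shapeAt, hx] at this ⊢
      exact this

/-! ### The chain tableau invariant -/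

lemma chainTab_congr {c c' : ℕ → Word k} :
    ∀ m, (∀ i, i ≤ m → c i = c' i) → chainTab k c m = chainTab k c' m := by
  intro m
  induction m with
  | zero => intro _; rfl
  | succ m ih =>
    intro h
    show updateTab k (m+1) (c m) (c (m+1)) (chainTab k c m)
        = updateTab k (m+1) (c' m) (c' (m+1)) (chainTab k c' m)
    rw [h m (by omega), h (m+1) (le_refl _), ih (fun i hi => h i (by omega))]

lemma chainTab_inv {n : ℕ} {c : ℕ → Word k} (hc : IsZChain k n c) :
    ∀ m, m ≤ n →
      Tab.shape (chainTab k c m) = c m ∧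
      (∀ e ∈ Tab.entries (chainTab k c m), 1 ≤ e ∧ e ≤ m) ∧
      (∀ i, i ≤ m → shapeAt k i (chainTab k c m) = c i) := by
  intro m
  induction m with
  | zero =>
    intro _
    refine ⟨by simp [chainTab, hc.1], by simp [chainTab], ?_⟩
    intro i hi
    interval_cases i
    simp [chainTab, hc.1]
  | succ m ih =>
    intro hm
    obtain ⟨hsh, hent, hsa⟩ := ih (by omega)
    have hcov := hc.2 m (by omega)
    show _ ∧ _ ∧ _
    rcases hcov with ⟨p, s, j, hp, hj1, hjk, hw, hz⟩ | ⟨p, s, j, hp, hj1, hjk, hw, hz⟩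
    · -- change: c m = p ++ one j :: s, c (m+1) = p ++ two :: s
      obtain ⟨D, col, R, hT, hDp, hcol, hRs⟩ := shape_split p (chainTab k c m) _ s (by rw [hsh, hz])
      have hDtwo : ∀ d ∈ D, Col.shape d = Letter.two := by
        intro d hd
        have : Col.shape d ∈ Tab.shape D := List.mem_map_of_mem hd
        rw [hDp] at this
        exact hp _ this
      obtain ⟨v, hcolv⟩ := col_of_shape_one hcol
      have hupd : chainTab k c (m+1) = D ++ Col.double (k + 1 - j) j (m+1) v :: R := by
        show updateTab k (m+1) (c m) (c (m+1)) (chainTab k c m) = _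
        rw [hz, hw, hT, hcolv, ← hDp]
        exact updateTab_chg (m+1) j v D hDtwo R s
      have hentTm : ∀ e ∈ Tab.entries (D ++ Col.single j v :: R), 1 ≤ e ∧ e ≤ m := by
        rw [hT, hcolv] at hent; exact hent
      refine ⟨?_, ?_, ?_⟩
      · rw [hupd, shape_append, shape_cons, colshape_double, hDp, hRs, hw]
      · rw [hupd]
        intro e he
        rw [entries_append] at he
        rcases List.mem_append.mp he with h1 | h1
        · have := hentTm e (by rw [entries_append]; exact List.mem_append.mpr (Or.inl h1))
          omega
        · simp only [entries_cons_double, List.mem_cons] at h1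
          rcases h1 with rfl | rfl | h1
          · omega
          · have := hentTm e (by rw [entries_append]; simp)
            omega
          · have := hentTm e (by rw [entries_append]; simp [h1])
            omega
      · intro i hi
        rcases Nat.lt_or_ge i (m+1) with hlt | hge
        · have hi' : i ≤ m := by omega
          rw [hupd]
          have hold := hsa i hi'
          rw [hT, hcolv] at hold
          rw [shapeAt_append] at hold ⊢
          have : shapeAt k i (Col.double (k+1-j) j (m+1) v :: R)
              = shapeAt k i (Col.single j v :: R) := by
            have hm1 : ¬ (m+1 ≤ i) := by omega
            simp [shapeAt, List.filterMap_cons, hm1]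
          rw [this]
          exact hold
        · have hieq : i = m + 1 := by omega
          subst hieq
          rw [hupd, shapeAt_append]
          have hD' : shapeAt k (m+1) D = Tab.shape D := by
            apply shapeAt_full
            intro e he
            have := hentTm e (by rw [entries_append]; exact List.mem_append.mpr (Or.inl he))
            omega
          have hR' : shapeAt k (m+1) R = Tab.shape R := by
            apply shapeAt_full
            intro e he
            have := hentTm e (by rw [entries_append]; simp [he])
            omega
          have hv : v ≤ m + 1 := by
            have := hentTm v (by rw [entries_append]; simp)
            omega
          have hhd : shapeAt k (m+1) (Col.double (k+1-j) j (m+1) v :: R)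
              = Letter.two :: shapeAt k (m+1) R := by
            simp [shapeAt, List.filterMap_cons]
          rw [hhd, hD', hR', hDp, hRs, hw]
    · -- insertion: c (m+1) = p ++ one j :: s, c m = p ++ s
      have hsplit : Tab.shape (chainTab k c m) = p ++ s := by rw [hsh, hz]
      obtain ⟨D, R, hT, hDp, hRs⟩ : ∃ D R, chainTab k c m = D ++ R ∧
          Tab.shape D = p ∧ Tab.shape R = s := by
        cases s with
        | nil =>
          refine ⟨chainTab k c m, [], by simp, by simpa using hsplit, by simp⟩
        | cons l s' =>
          obtain ⟨D, col, R, h1, h2, h3, h4⟩ := shape_split p (chainTab k c m) l s' hsplit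
          exact ⟨D, col :: R, h1, h2, by simp [h3, h4]⟩
      have hDtwo : ∀ d ∈ D, Col.shape d = Letter.two := by
        intro d hd
        have : Col.shape d ∈ Tab.shape D := List.mem_map_of_mem hd
        rw [hDp] at this
        exact hp _ this
      have hupd : chainTab k c (m+1) = D ++ Col.single j (m+1) :: R := by
        show updateTab k (m+1) (c m) (c (m+1)) (chainTab k c m) = _
        rw [hz, hw, hT, ← hDp, ← hRs]
        exact updateTab_ins (m+1) j D hDtwo R
      have hentTm : ∀ e ∈ Tab.entries (D ++ R), 1 ≤ e ∧ e ≤ m := by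
        rw [hT] at hent; exact hent
      refine ⟨?_, ?_, ?_⟩
      · rw [hupd, shape_append, shape_cons, colshape_single, hDp, hRs, hw]
      · rw [hupd]
        intro e he
        rw [entries_append] at he
        rcases List.mem_append.mp he with h1 | h1
        · have := hentTm e (by rw [entries_append]; exact List.mem_append.mpr (Or.inl h1))
          omega
        · simp only [entries_cons_single, List.mem_cons] at h1
          rcases h1 with rfl | h1
          · omega
          · have := hentTm e (by rw [entries_append]; simp [h1])
            omega
      · intro i hi
        rcases Nat.lt_or_ge i (m+1) with hlt | hge
        · have hi' : i ≤ m := by omega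
          rw [hupd]
          have hold := hsa i hi'
          rw [hT, shapeAt_append] at hold
          rw [shapeAt_append]
          have : shapeAt k i (Col.single j (m+1) :: R) = shapeAt k i R := by
            have hm1 : ¬ (m+1 ≤ i) := by omega
            simp [shapeAt, List.filterMap_cons, hm1]
          rw [this]
          exact hold
        · have hieq : i = m + 1 := by omega
          subst hieq
          rw [hupd, shapeAt_append]
          have hD' : shapeAt k (m+1) D = Tab.shape D := by
            apply shapeAt_full
            intro e he
            have := hentTm e (by rw [entries_append]; exact List.mem_append.mpr (Or.inl he))
            omega
          have hR' : shapeAt k (m+1) R = Tab.shape R := by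
            apply shapeAt_full
            intro e he
            have := hentTm e (by rw [entries_append]; simp [he])
            omega
          have hhd : shapeAt k (m+1) (Col.single j (m+1) :: R)
              = Letter.one j :: shapeAt k (m+1) R := by
            simp [shapeAt, List.filterMap_cons]
          rw [hhd, hD', hR', hDp, hRs, hw]


/-! ### Properties of the partial insertion tableaux -/

lemma finRange_getElem? {n i : ℕ} (hi : i < n) :
    (List.finRange n)[i]? = some (⟨i, hi⟩ : Fin n) := by
  rw [List.getElem?_eq_getElem (by simpa using hi)]
  simp [List.getElem_finRange]

@[simp] lemma PPartial_zero {n : ℕ} (π : ColoredPerm n k) : PPartial k n π 0 = [] := rfl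

lemma PPartial_succ {n : ℕ} (π : ColoredPerm n k) {i : ℕ} (hi : i < n) :
    PPartial k n π (i + 1)
      = insertVal k ((π.perm ⟨i, hi⟩ : ℕ) + 1) (π.color ⟨i, hi⟩) (PPartial k n π i) := by
  unfold PPartial
  rw [List.take_succ, finRange_getElem? hi]
  simp

lemma mem_take_finRange {n i : ℕ} {m : Fin n} (h : m ∈ (List.finRange n).take i) :
    (m : ℕ) < i := by
  obtain ⟨jj, hjj, heq⟩ := List.getElem_of_mem h
  have hjj' : jj < i := by
    rw [List.length_take, List.length_finRange] at hjj; omega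
  rw [List.getElem_take] at heq
  have := congrArg Fin.val heq
  simp only [List.getElem_finRange, Fin.cast, Fin.val_mk] at this
  omega

lemma PPartial_inv {n : ℕ} (π : ColoredPerm n k) :
    ∀ i, i ≤ n → Std k (PPartial k n π i) ∧
      (Tab.entries (PPartial k n π i)).Perm
        (((List.finRange n).take i).map (fun m => (π.perm m : ℕ) + 1)) := by
  intro i
  induction i with
  | zero => intro _; exact ⟨std_nil, by simp⟩
  | succ i ih =>
    intro hi
    have hi' : i < n := by omega
    obtain ⟨hstd, hperm⟩ := ih (by omega)
    set mi : Fin n := ⟨i, hi'⟩ with hmi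
    have hfresh : ((π.perm mi : ℕ) + 1) ∉ Tab.entries (PPartial k n π i) := by
      intro hmem
      have : ((π.perm mi : ℕ) + 1) ∈ ((List.finRange n).take i).map
          (fun m => (π.perm m : ℕ) + 1) := hperm.subset hmem
      obtain ⟨m, hm, hfm⟩ := List.mem_map.mp this
      have : π.perm m = π.perm mi := Fin.ext (by omega)
      have hmeq : m = mi := π.perm.injective this
      have hmlt := mem_take_finRange hm
      rw [hmeq] at hmlt
      exact absurd hmlt (by simp [hmi])
    refine ⟨?_, ?_⟩
    · rw [PPartial_succ π hi']
      exact std_insertVal (π.color_pos mi) (π.color_le mi) _ hstd hfresh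
    · rw [PPartial_succ π hi']
      have h1 := insertVal_entries ((π.perm mi : ℕ) + 1) (π.color mi) (PPartial k n π i)
      have h2 : ((List.finRange n).take (i+1)).map (fun m => (π.perm m : ℕ) + 1)
          = ((List.finRange n).take i).map (fun m => (π.perm m : ℕ) + 1)
            ++ [(π.perm mi : ℕ) + 1] := by
        rw [List.take_succ, finRange_getElem? hi']
        simp [hmi]
      rw [h2]
      calc Tab.entries (insertVal k ((π.perm mi : ℕ) + 1) (π.color mi) (PPartial k n π i))
          ~ ((π.perm mi : ℕ) + 1) :: Tab.entries (PPartial k n π i) := h1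
        _ ~ ((π.perm mi : ℕ) + 1) ::
              ((List.finRange n).take i).map (fun m => (π.perm m : ℕ) + 1) := hperm.cons _
        _ ~ ((List.finRange n).take i).map (fun m => (π.perm m : ℕ) + 1)
              ++ [(π.perm mi : ℕ) + 1] := (List.perm_append_singleton _ _).symm

lemma QChain_isZChain {n : ℕ} (π : ColoredPerm n k) : IsZChain k n (QChain k n π) := by
  refine ⟨rfl, ?_⟩
  intro i hi
  show ZCovers k (Tab.shape (PPartial k n π i)) (Tab.shape (PPartial k n π (i+1)))
  rw [PPartial_succ π hi]
  exact zcovers_insertVal (π.color_pos _) (π.color_le _) _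
    ((PPartial_inv π i (by omega)).1).1

lemma entries_PTab_perm {n : ℕ} (π : ColoredPerm n k) :
    (Tab.entries (PTab k n π)).Perm (List.range' 1 n) := by
  have h1 := (PPartial_inv π n (le_refl n)).2
  have hfull : (List.finRange n).take n = List.finRange n :=
    List.take_of_length_le (by simp)
  rw [hfull] at h1
  have h2 : (List.finRange n).map (fun m => (π.perm m : ℕ) + 1)
      = ((List.finRange n).map π.perm).map (fun a : Fin n => (a : ℕ) + 1) := by
    rw [List.map_map]; rfl
  have h3 : (((List.finRange n).map π.perm).map (fun a : Fin n => (a : ℕ) + 1)).Perm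
      ((List.finRange n).map (fun a : Fin n => (a : ℕ) + 1)) :=
    (π.perm.map_finRange_perm).map _
  have h4 : (List.finRange n).map (fun a : Fin n => (a : ℕ) + 1) = List.range' 1 n := by
    have : (List.finRange n).map (fun a : Fin n => (a : ℕ) + 1)
        = ((List.finRange n).map Fin.val).map (fun v => v + 1) := by
      rw [List.map_map]; rfl
    rw [this, (List.ext_getElem (by simp) (by simp) : (List.finRange n).map Fin.val = List.range n), List.range'_eq_map_range]
    apply List.map_congr_left
    intro a _
    omega
  exact ((h1.trans (h2 ▸ h3)).trans (h4 ▸ List.Perm.refl _))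

lemma PTab_standard {n : ℕ} (π : ColoredPerm n k) : IsStandardTab k n (PTab k n π) := by
  obtain ⟨⟨hH, hC, hD, _⟩, _⟩ := PPartial_inv π n (le_refl n)
  exact ⟨hH, entries_PTab_perm π, hC, hD⟩


/-! ### Reverse insertion specification -/

/-- The conclusions of the reverse-insertion lemma. -/
def UnSpec (k : ℕ) (z : Word k) (T : Tab k) : Prop :=
  insertVal k (unIns k z T).1 (unIns k z T).2.1 (unIns k z T).2.2 = T ∧
  Tab.shape (unIns k z T).2.2 = z ∧ Std k (unIns k z T).2.2 ∧
  1 ≤ (unIns k z T).2.1 ∧ (unIns k z T).2.1 ≤ k ∧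
  (Tab.entries T).Perm ((unIns k z T).1 :: Tab.entries (unIns k z T).2.2)

lemma unIns_step_rec {z' : Word k} {R : Tab k} {a b x y : ℕ}
    (hstdT : Std k (Col.double a b x y :: R))
    (IH : UnSpec k z' R) : UnSpec k (Letter.two :: z') (Col.double a b x y :: R) := by
  obtain ⟨hH, hC, hD, hN⟩ := hstdT
  obtain ⟨ha1, hak, hbeq⟩ := hH (Col.double a b x y) (by simp)
  have hxy : x < y := hD _ (by simp) a b x y rfl
  have hbelow : ∀ bb ∈ Tab.bottoms R, bb < y := by
    have hpw := List.isChain_iff_pairwise.mp (by simpa [List.Chain'] using hC)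
    exact fun bb hbb => (List.pairwise_cons.mp hpw).1 bb hbb
  have hentR : ∀ e ∈ Tab.entries R, e < y :=
    entries_lt hbelow (fun d hd => hD d (by simp [hd]))
  obtain ⟨ih1, ih2, ih3, ih4, ih5, ih6⟩ := IH
  have hsubE : ∀ e ∈ Tab.entries (unIns k z' R).2.2, e ∈ Tab.entries R :=
    fun e he => ih6.symm.subset (List.mem_cons.mpr (Or.inr he))
  have hr1mem : (unIns k z' R).1 ∈ Tab.entries R :=
    ih6.symm.subset (List.mem_cons.mpr (Or.inl rfl))
  have hr1y : (unIns k z' R).1 < y := hentR _ hr1mem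
  unfold UnSpec
  simp only [unIns_double_two]
  refine ⟨?_, ?_, ?_, ha1, hak, ?_⟩
  · rw [insertVal_double_ge (by omega : ¬ y < x), ih1, hbeq]
  · rw [shape_cons, colshape_double, ih2]
  · refine ⟨?_, ?_, ?_, ?_⟩
    · intro d hd
      rcases List.mem_cons.mp hd with rfl | hd
      · exact ⟨ih4, ih5, rfl⟩
      · exact ih3.1 d hd
    · rw [bottoms_cons, bottomVal_double]
      refine List.isChain_cons.mpr ⟨?_, ih3.2.1⟩
      intro u hu
      exact hentR u (hsubE u (mem_entries_of_mem_bottoms (List.mem_of_mem_head? hu)))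
    · intro d hd ht2 hb2 vt2 vb2 hceq
      rcases List.mem_cons.mp hd with rfl | hd
      · simp only [Col.double.injEq] at hceq
        omega
      · exact ih3.2.2.1 d hd ht2 hb2 vt2 vb2 hceq
    · have hyR : (y :: Tab.entries R).Nodup := (List.nodup_cons.mp hN).2
      have hp2 : (y :: Tab.entries R).Perm
          ((unIns k z' R).1 :: y :: Tab.entries (unIns k z' R).2.2) :=
        (ih6.cons y).trans (List.Perm.swap _ _ _)
      simpa using hp2.nodup hyR
  · have hp2 : (y :: Tab.entries R).Perm
        ((unIns k z' R).1 :: y :: Tab.entries (unIns k z' R).2.2) :=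
      (ih6.cons y).trans (List.Perm.swap _ _ _)
    simpa using hp2.cons x

lemma unIns_spec :
    ∀ T : Tab k, Std k T → ∀ z w : Word k, ZCovers k z w → Tab.shape T = w →
      UnSpec k z T := by
  intro T
  induction T with
  | nil =>
    intro _ z w hzw hsh
    exfalso
    rcases hzw with ⟨p, s, j, _, _, _, hw, _⟩ | ⟨p, s, j, _, _, _, hw, _⟩ <;>
    · rw [hw] at hsh
      exact absurd hsh (by simp)
  | cons c R ih =>
    intro hstd z w hzw hsh
    rcases hzw with ⟨p, s, j, hp, hj1, hjk, hw, hz⟩ | ⟨p, s, j, hp, hj1, hjk, hw, hz⟩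
    · -- change cover: w = p ++ two :: s, z = p ++ one j :: s
      cases p with
      | nil =>
        subst hw hz
        simp only [List.nil_append] at hsh ⊢
        have hc2 : Col.shape c = Letter.two := by
          simpa using congrArg List.head? hsh
        obtain ⟨a, b, x, y, rfl⟩ := col_of_shape_two hc2
        have hsR : Tab.shape R = s := by
          simpa using congrArg List.tail hsh
        obtain ⟨hH, hC, hD, hN⟩ := hstd
        obtain ⟨ha1, hak, hbeq⟩ := hH (Col.double a b x y) (by simp)
        have hxy : x < y := hD _ (by simp) a b x y rfl
        unfold UnSpec
        simp only [unIns_double_one]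
        refine ⟨?_, ?_, ?_, ha1, hak, ?_⟩
        · rw [insertVal_single_ge (by omega : ¬ y < x), hbeq]
        · rw [shape_cons, colshape_single, hsR]
        · refine ⟨?_, ?_, ?_, ?_⟩
          · intro d hd
            rcases List.mem_cons.mp hd with rfl | hd
            · exact ⟨hj1, hjk⟩
            · exact hH d (by simp [hd])
          · simpa using hC
          · intro d hd ht2 hb2 vt2 vb2 hceq
            rcases List.mem_cons.mp hd with rfl | hd
            · exact absurd hceq (by simp)
            · exact hD d (by simp [hd]) ht2 hb2 vt2 vb2 hceq
          · exact (List.nodup_cons.mp hN).2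
        · exact List.Perm.refl _
      | cons l p' =>
        have hl : l = Letter.two := hp l (by simp)
        subst hl
        rw [hw] at hsh
        have hc2 : Col.shape c = Letter.two := by
          simpa using congrArg List.head? hsh
        obtain ⟨a, b, x, y, rfl⟩ := col_of_shape_two hc2
        have hsR : Tab.shape R = p' ++ Letter.two :: s := by
          simpa using congrArg List.tail hsh
        have hcov' : ZCovers k (p' ++ Letter.one j :: s) (p' ++ Letter.two :: s) :=
          Or.inl ⟨p', s, j, fun l hl => hp l (by simp [hl]), hj1, hjk, rfl, rfl⟩
        have IH := ih (std_tail hstd) _ _ hcov' hsR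
        rw [hz]
        exact unIns_step_rec hstd IH
    · -- insertion cover: w = p ++ one j :: s, z = p ++ s
      cases p with
      | nil =>
        subst hw
        rw [hz]
        simp only [List.nil_append] at hsh ⊢
        have hc1 : Col.shape c = Letter.one j := by
          simpa using congrArg List.head? hsh
        obtain ⟨v, rfl⟩ := col_of_shape_one hc1
        have hsR : Tab.shape R = s := by
          simpa using congrArg List.tail hsh
        obtain ⟨hH, hC, hD, hN⟩ := hstd
        unfold UnSpec
        rw [unIns_single]
        refine ⟨?_, hsR, std_tail ⟨hH, hC, hD, hN⟩, hj1, hjk, ?_⟩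
        · cases R with
          | nil => rw [insertVal_nil]
          | cons c' R' =>
            have hvc' : Col.bottomVal c' < v := by
              have h2 := hC
              rw [bottoms_cons, bottoms_cons, bottomVal_single] at h2
              exact (List.isChain_cons_cons.mp h2).1
            rw [insertVal_cons_lt hvc']
        · exact List.Perm.refl _
      | cons l p' =>
        have hl : l = Letter.two := hp l (by simp)
        subst hl
        rw [hw] at hsh
        have hc2 : Col.shape c = Letter.two := by
          simpa using congrArg List.head? hsh
        obtain ⟨a, b, x, y, rfl⟩ := col_of_shape_two hc2
        have hsR : Tab.shape R = p' ++ Letter.one j :: s := by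
          simpa using congrArg List.tail hsh
        have hcov' : ZCovers k (p' ++ s) (p' ++ Letter.one j :: s) :=
          Or.inr ⟨p', s, j, fun l hl => hp l (by simp [hl]), hj1, hjk, rfl, rfl⟩
        have IH := ih (std_tail hstd) _ _ hcov' hsR
        rw [hz]
        exact unIns_step_rec hstd IH


/-! ### Reconstruction of the colored permutation -/

@[simp] lemma QChain_def {n : ℕ} (π : ColoredPerm n k) (i : ℕ) :
    QChain k n π i = Tab.shape (PPartial k n π i) := rfl

/-- The tableau obtained from `P` by undoing the last `d` insertions (along the chain `c`). -/
def backT (k n : ℕ) (c : ℕ → Word k) (P : Tab k) : ℕ → Tab k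
  | 0 => P
  | d + 1 => (unIns k (c (n - (d + 1))) (backT k n c P d)).2.2

/-- The value removed at the `(d+1)`-st undo step. -/
def backV (k n : ℕ) (c : ℕ → Word k) (P : Tab k) (d : ℕ) : ℕ :=
  (unIns k (c (n - (d + 1))) (backT k n c P d)).1

/-- The color removed at the `(d+1)`-st undo step. -/
def backC (k n : ℕ) (c : ℕ → Word k) (P : Tab k) (d : ℕ) : ℕ :=
  (unIns k (c (n - (d + 1))) (backT k n c P d)).2.1

lemma backT_succ (n : ℕ) (c : ℕ → Word k) (P : Tab k) (d : ℕ) :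
    backT k n c P (d + 1) = (unIns k (c (n - (d + 1))) (backT k n c P d)).2.2 := rfl

lemma back_inv {n : ℕ} {c : ℕ → Word k} (hc : IsZChain k n c) {P : Tab k}
    (hP : Std k P) (hsh : Tab.shape P = c n) :
    ∀ d, d ≤ n →
      Std k (backT k n c P d) ∧ Tab.shape (backT k n c P d) = c (n - d) ∧
      (Tab.entries P).Perm
        ((List.range d).map (backV k n c P) ++ Tab.entries (backT k n c P d)) := by
  intro d
  induction d with
  | zero =>
    intro _
    exact ⟨hP, by simpa [backT] using hsh, by simp [backT]⟩
  | succ d ih =>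
    intro hd
    obtain ⟨hstd, hshd, hper⟩ := ih (by omega)
    have hcov : ZCovers k (c (n - (d + 1))) (c (n - d)) := by
      have h1 := hc.2 (n - (d + 1)) (by omega)
      have h2 : n - (d + 1) + 1 = n - d := by omega
      rwa [h2] at h1
    obtain ⟨s1, s2, s3, s4, s5, s6⟩ := unIns_spec (backT k n c P d) hstd _ _ hcov hshd
    refine ⟨s3, s2, ?_⟩
    rw [List.range_succ, List.map_append, List.append_assoc]
    refine hper.trans (List.Perm.append_left _ ?_)
    exact s6

lemma back_step {n : ℕ} {c : ℕ → Word k} (hc : IsZChain k n c) {P : Tab k}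
    (hP : Std k P) (hsh : Tab.shape P = c n) (d : ℕ) (hd : d < n) :
    insertVal k (backV k n c P d) (backC k n c P d) (backT k n c P (d + 1))
        = backT k n c P d ∧
      1 ≤ backC k n c P d ∧ backC k n c P d ≤ k := by
  obtain ⟨hstd, hshd, _⟩ := back_inv hc hP hsh d (by omega)
  have hcov : ZCovers k (c (n - (d + 1))) (c (n - d)) := by
    have h1 := hc.2 (n - (d + 1)) (by omega)
    have h2 : n - (d + 1) + 1 = n - d := by omega
    rwa [h2] at h1
  obtain ⟨s1, _, _, s4, s5, _⟩ := unIns_spec (backT k n c P d) hstd _ _ hcov hshd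
  exact ⟨s1, s4, s5⟩

/-- Fix `k ≥ 1` and `n ≥ 0`.  The `k`-ribbon insertion algorithm
`π ↦ (P(π), Q(π))` is a bijection from the set of `k`-colored permutations of length `n`
onto the set of pairs `(P, Q)` of tableaux of the same `k`-ribbon Fibonacci shape in which
`P` is a standard `k`-ribbon Fibonacci tableau with entries `1, …, n` and `Q` is a
`k`-ribbon Fibonacci path tableau with entries `1, …, n`. -/
theorem kRibbonInsertion_bijective (k n : ℕ) (hk : 1 ≤ k) :
    Set.BijOn (fun π : ColoredPerm n k => (PTab k n π, QTab k n π)) Set.univ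
      {PQ : Tab k × Tab k |
        IsStandardTab k n PQ.1 ∧ IsPathTab k n PQ.2 ∧ Tab.shape PQ.1 = Tab.shape PQ.2} := by
  refine ⟨?_, ?_, ?_⟩
  · -- MapsTo
    intro π _
    refine ⟨PTab_standard π, ⟨QChain k n π, QChain_isZChain π, rfl⟩, ?_⟩
    have h := (chainTab_inv (QChain_isZChain π) n (le_refl n)).1
    exact h.symm
  · -- InjOn
    intro π1 _ π2 _ heq
    simp only [Prod.mk.injEq] at heq
    obtain ⟨hP, hQ⟩ := heq
    have hQC : ∀ i, i ≤ n → QChain k n π1 i = QChain k n π2 i := by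
      intro i hi
      have h1 := (chainTab_inv (QChain_isZChain π1) n (le_refl n)).2.2 i hi
      have h2 := (chainTab_inv (QChain_isZChain π2) n (le_refl n)).2.2 i hi
      rw [← h1, ← h2]
      show shapeAt k i (QTab k n π1) = shapeAt k i (QTab k n π2)
      rw [hQ]
    have keyT : ∀ d, d ≤ n → PPartial k n π1 (n - d) = PPartial k n π2 (n - d) := by
      intro d
      induction d with
      | zero =>
        intro _
        simpa only [Nat.sub_zero, PTab] using hP
      | succ d ih =>
        intro hd
        have hd' := ih (by omega)
        have hin : n - (d + 1) < n := by omega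
        set i := n - (d + 1) with hidef
        have hns : n - d = i + 1 := by omega
        rw [hns] at hd'
        have e1 : unIns k (QChain k n π1 i) (PPartial k n π1 (i + 1))
            = ((π1.perm ⟨i, hin⟩ : ℕ) + 1, π1.color ⟨i, hin⟩, PPartial k n π1 i) := by
          rw [QChain_def, PPartial_succ π1 hin]
          exact unIns_insertVal _ ((PPartial_inv π1 i (by omega)).1).1 _ _
        have e2 : unIns k (QChain k n π2 i) (PPartial k n π2 (i + 1))
            = ((π2.perm ⟨i, hin⟩ : ℕ) + 1, π2.color ⟨i, hin⟩, PPartial k n π2 i) := by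
          rw [QChain_def, PPartial_succ π2 hin]
          exact unIns_insertVal _ ((PPartial_inv π2 i (by omega)).1).1 _ _
        have e3 : unIns k (QChain k n π1 i) (PPartial k n π1 (i + 1))
            = unIns k (QChain k n π2 i) (PPartial k n π2 (i + 1)) := by
          rw [hQC i (by omega), hd']
        rw [e1, e2] at e3
        exact congrArg (fun r => r.2.2) e3
    have keyV : ∀ (i : ℕ) (hin : i < n),
        (π1.perm ⟨i, hin⟩ : ℕ) = (π2.perm ⟨i, hin⟩ : ℕ) ∧
          π1.color ⟨i, hin⟩ = π2.color ⟨i, hin⟩ := by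
      intro i hin
      have h1 : PPartial k n π1 (i + 1) = PPartial k n π2 (i + 1) := by
        have := keyT (n - (i + 1)) (by omega)
        rwa [(by omega : n - (n - (i + 1)) = i + 1)] at this
      have e1 : unIns k (QChain k n π1 i) (PPartial k n π1 (i + 1))
          = ((π1.perm ⟨i, hin⟩ : ℕ) + 1, π1.color ⟨i, hin⟩, PPartial k n π1 i) := by
        rw [QChain_def, PPartial_succ π1 hin]
        exact unIns_insertVal _ ((PPartial_inv π1 i (by omega)).1).1 _ _
      have e2 : unIns k (QChain k n π2 i) (PPartial k n π2 (i + 1))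
          = ((π2.perm ⟨i, hin⟩ : ℕ) + 1, π2.color ⟨i, hin⟩, PPartial k n π2 i) := by
        rw [QChain_def, PPartial_succ π2 hin]
        exact unIns_insertVal _ ((PPartial_inv π2 i (by omega)).1).1 _ _
      have e3 : unIns k (QChain k n π1 i) (PPartial k n π1 (i + 1))
          = unIns k (QChain k n π2 i) (PPartial k n π2 (i + 1)) := by
        rw [hQC i (by omega), h1]
      rw [e1, e2] at e3
      have hv := congrArg (fun r => r.1) e3
      have hcv := congrArg (fun r => r.2.1) e3
      simp only at hv hcv
      exact ⟨by omega, hcv⟩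
    have hperm : π1.perm = π2.perm := by
      apply Equiv.ext
      intro m
      have := (keyV m.val m.isLt).1
      have hm : (⟨m.val, m.isLt⟩ : Fin n) = m := rfl
      rw [hm] at this
      exact Fin.ext this
    have hcol : π1.color = π2.color := by
      funext m
      have := (keyV m.val m.isLt).2
      have hm : (⟨m.val, m.isLt⟩ : Fin n) = m := rfl
      rwa [hm] at this
    obtain ⟨p1, c1, hp1, hc1⟩ := π1
    obtain ⟨p2, c2, hp2, hc2⟩ := π2
    simp only at hperm hcol
    subst hperm hcol
    rfl
  · -- SurjOn
    rintro ⟨P, Q⟩ ⟨hstdP, ⟨c, hc, hQeq⟩, hshape⟩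
    simp only at hstdP hshape hQeq ⊢
    obtain ⟨hH, hper, hCh, hDb⟩ := hstdP
    have hPnodup : (Tab.entries P).Nodup := hper.symm.nodup (List.nodup_range' (s := 1) (n := n))
    have hPstd : Std k P := ⟨hH, hCh, hDb, hPnodup⟩
    have hshQ : Tab.shape Q = c n := by
      rw [hQeq]
      exact (chainTab_inv hc n (le_refl n)).1
    have hshP : Tab.shape P = c n := by rw [hshape, hshQ]
    -- the final tableau is empty
    have hback := back_inv hc hPstd hshP n (le_refl n)
    have hbTn : backT k n c P n = [] := by
      have := hback.2.1
      rw [Nat.sub_self] at this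
      rw [hc.1] at this
      exact List.map_eq_nil_iff.mp this
    have hentP : (Tab.entries P).Perm ((List.range n).map (backV k n c P)) := by
      have := hback.2.2
      rwa [hbTn, entries_nil, List.append_nil] at this
    have hmb : ((List.range n).map (backV k n c P)).Perm (List.range' 1 n) :=
      hentP.symm.trans hper
    have hval : ∀ d, d < n → 1 ≤ backV k n c P d ∧ backV k n c P d ≤ n := by
      intro d hd
      have hmem : backV k n c P d ∈ (List.range n).map (backV k n c P) :=
        List.mem_map_of_mem (List.mem_range.mpr hd)
      have := hmb.subset hmem
      rw [List.mem_range'_1] at this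
      omega
    have hnd : ((List.range n).map (backV k n c P)).Nodup :=
      hmb.symm.nodup (List.nodup_range' (s := 1) (n := n))
    have hfb : ∀ m : Fin n, backV k n c P (n - 1 - (m : ℕ)) - 1 < n := by
      intro m
      have hm := m.isLt
      have := hval (n - 1 - (m : ℕ)) (by omega)
      omega
    set f : Fin n → Fin n := fun m => ⟨backV k n c P (n - 1 - (m : ℕ)) - 1, hfb m⟩ with hfdef
    have hfinj : Function.Injective f := by
      intro m1 m2 hf
      have h1 := hval (n - 1 - (m1 : ℕ)) (by have := m1.isLt; omega)
      have h2 := hval (n - 1 - (m2 : ℕ)) (by have := m2.isLt; omega)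
      have hfv : backV k n c P (n - 1 - (m1 : ℕ)) = backV k n c P (n - 1 - (m2 : ℕ)) := by
        have := congrArg Fin.val hf
        simp only [hfdef] at this
        omega
      have heq := List.inj_on_of_nodup_map hnd
        (List.mem_range.mpr (by have := m1.isLt; omega))
        (List.mem_range.mpr (by have := m2.isLt; omega)) hfv
      have hm1 := m1.isLt
      have hm2 := m2.isLt
      exact Fin.ext (by omega)
    set π : ColoredPerm n k :=
      { perm := Equiv.ofBijective f (Finite.injective_iff_bijective.mp hfinj)
        color := fun m => backC k n c P (n - 1 - (m : ℕ))
        color_pos := fun m =>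
          (back_step hc hPstd hshP (n - 1 - (m : ℕ)) (by have := m.isLt; omega)).2.1
        color_le := fun m =>
          (back_step hc hPstd hshP (n - 1 - (m : ℕ)) (by have := m.isLt; omega)).2.2 }
      with hπdef
    have hPP : ∀ i, i ≤ n → PPartial k n π i = backT k n c P (n - i) := by
      intro i
      induction i with
      | zero =>
        intro _
        rw [Nat.sub_zero, hbTn]
        rfl
      | succ i ih =>
        intro hi
        have hin : i < n := by omega
        rw [PPartial_succ π hin, ih (by omega)]
        have hpv : (π.perm ⟨i, hin⟩ : ℕ) + 1 = backV k n c P (n - 1 - i) := by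
          have h1 : π.perm ⟨i, hin⟩ = f ⟨i, hin⟩ := rfl
          have h2 : ((f ⟨i, hin⟩ : Fin n) : ℕ) = backV k n c P (n - 1 - i) - 1 := rfl
          rw [h1, h2]
          have := hval (n - 1 - i) (by omega)
          omega
        have hpc : π.color ⟨i, hin⟩ = backC k n c P (n - 1 - i) := rfl
        rw [hpv, hpc]
        have hni : n - i = (n - 1 - i) + 1 := by omega
        rw [hni]
        have := (back_step hc hPstd hshP (n - 1 - i) (by omega)).1
        rw [this]
        congr 1
        omega
    have hPT : PTab k n π = P := by
      have := hPP n (le_refl n)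
      rwa [Nat.sub_self] at this
    have hQT : QTab k n π = Q := by
      show chainTab k (QChain k n π) n = Q
      have hqc : ∀ i, i ≤ n → QChain k n π i = c i := by
        intro i hi
        rw [QChain_def, hPP i hi, (back_inv hc hPstd hshP (n - i) (by omega)).2.1]
        congr 1
        omega
      rw [chainTab_congr n hqc, hQeq]
    exact ⟨π, trivial, by rw [← hPT, ← hQT]⟩

end KRF
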